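/- arXiv:1111.2259 — 4 statements merged into one kernel-verified Lean document; each statement's English description precedes it below -/
import Mathlib

section
/- If F is a point inside triangle ABC such that the angles ∠AFB, ∠BFC, ∠CFA are all equal to 120°, then F minimizes the function p ↦ dist(p,A) + dist(p,B) + dist(p,C) over all points p in the plane. -/
open EuclideanGeometry

open RealInnerProductSpace in
private lemma inner_of_angle {E : Type*} [NormedAddCommGroup E] [InnerProductSpace ℝ E]
    {x y : E} (h : InnerProductGeometry.angle x y = 2 * Real.pi / 3) :
    ⟪x, y⟫ = -(1/2) * (‖x‖ * ‖y‖) := by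
  have hc := InnerProductGeometry.cos_angle x y
  rw [h] at hc
  have h23 : Real.cos (2 * Real.pi / 3) = -(1/2) := by
    have : (2 : ℝ) * Real.pi / 3 = Real.pi - Real.pi / 3 := by ring
    rw [this, Real.cos_pi_sub, Real.cos_pi_div_three]
  rw [h23] at hc
  rcases eq_or_ne (‖x‖ * ‖y‖) 0 with h0 | h0
  · rcases mul_eq_zero.mp h0 with h | h
    · simp [norm_eq_zero.mp h]
    · simp [norm_eq_zero.mp h]
  · field_simp at hc
    rw [eq_div_iff h0] at hc
    linarith [hc]

open RealInnerProductSpace in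
theorem fermat_point_angle_characterization_min
    (A B C F : EuclideanSpace ℝ (Fin 2))
    (hncol : ¬ Collinear ℝ ({A, B, C} : Set (EuclideanSpace ℝ (Fin 2))))
    (hF : F ∈ interior (convexHull ℝ ({A, B, C} : Set (EuclideanSpace ℝ (Fin 2)))))
    (hFA : F ≠ A) (hFB : F ≠ B) (hFC : F ≠ C)
    (h1 : ∠ A F B = 2 * Real.pi / 3)
    (h2 : ∠ B F C = 2 * Real.pi / 3)
    (h3 : ∠ C F A = 2 * Real.pi / 3) :
    ∀ p : EuclideanSpace ℝ (Fin 2),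
      dist F A + dist F B + dist F C ≤ dist p A + dist p B + dist p C := by
  intro p
  set a : EuclideanSpace ℝ (Fin 2) := A - F with ha_def
  set b : EuclideanSpace ℝ (Fin 2) := B - F with hb_def
  set c : EuclideanSpace ℝ (Fin 2) := C - F with hc_def
  have ha : a ≠ 0 := sub_ne_zero.mpr hFA.symm
  have hb : b ≠ 0 := sub_ne_zero.mpr hFB.symm
  have hc : c ≠ 0 := sub_ne_zero.mpr hFC.symm
  have hang : ∀ X Y : EuclideanSpace ℝ (Fin 2),
      ∠ X F Y = InnerProductGeometry.angle (X - F) (Y - F) := by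
    intro X Y
    rfl
  rw [hang] at h1 h2 h3
  have hab : ⟪a, b⟫ = -(1/2) * (‖a‖ * ‖b‖) := inner_of_angle h1
  have hbc : ⟪b, c⟫ = -(1/2) * (‖b‖ * ‖c‖) := inner_of_angle h2
  have hca : ⟪c, a⟫ = -(1/2) * (‖c‖ * ‖a‖) := inner_of_angle h3
  set u : EuclideanSpace ℝ (Fin 2) := ‖a‖⁻¹ • a with hu_def
  set v : EuclideanSpace ℝ (Fin 2) := ‖b‖⁻¹ • b with hv_def
  set w : EuclideanSpace ℝ (Fin 2) := ‖c‖⁻¹ • c with hw_def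
  have hna : ‖a‖ ≠ 0 := norm_ne_zero_iff.mpr ha
  have hnb : ‖b‖ ≠ 0 := norm_ne_zero_iff.mpr hb
  have hnc : ‖c‖ ≠ 0 := norm_ne_zero_iff.mpr hc
  have hnu : ‖u‖ = 1 := norm_smul_inv_norm ha
  have hnv : ‖v‖ = 1 := norm_smul_inv_norm hb
  have hnw : ‖w‖ = 1 := norm_smul_inv_norm hc
  have huu : ⟪u, u⟫ = 1 := by rw [real_inner_self_eq_norm_sq, hnu]; norm_num
  have hvv : ⟪v, v⟫ = 1 := by rw [real_inner_self_eq_norm_sq, hnv]; norm_num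
  have hww : ⟪w, w⟫ = 1 := by rw [real_inner_self_eq_norm_sq, hnw]; norm_num
  have huv : ⟪u, v⟫ = -(1/2) := by
    simp only [hu_def, hv_def, real_inner_smul_left, real_inner_smul_right, hab]
    field_simp
  have hvw : ⟪v, w⟫ = -(1/2) := by
    simp only [hv_def, hw_def, real_inner_smul_left, real_inner_smul_right, hbc]
    field_simp
  have hwu : ⟪w, u⟫ = -(1/2) := by
    simp only [hw_def, hu_def, real_inner_smul_left, real_inner_smul_right, hca]
    field_simp
  have hsum : u + v + w = 0 := by
    have h0 : ⟪u + v + w, u + v + w⟫ = 0 := by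
      simp only [inner_add_left, inner_add_right]
      linarith [real_inner_comm u v, real_inner_comm v w, real_inner_comm w u,
        huv, hvw, hwu, huu, hvv, hww]
    exact inner_self_eq_zero.mp h0
  -- key inequalities
  have key : ∀ (X : EuclideanSpace ℝ (Fin 2)) (e : EuclideanSpace ℝ (Fin 2)),
      ‖e‖ = 1 → ⟪X - p, e⟫ ≤ dist p X := by
    intro X e he
    calc ⟪X - p, e⟫ ≤ ‖X - p‖ * ‖e‖ := real_inner_le_norm _ _
    _ = dist p X := by rw [he, mul_one, ← dist_eq_norm, dist_comm]
  have hAu : ⟪a, u⟫ = ‖a‖ := by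
    rw [hu_def, real_inner_smul_right, real_inner_self_eq_norm_sq]
    field_simp
  have hBv : ⟪b, v⟫ = ‖b‖ := by
    rw [hv_def, real_inner_smul_right, real_inner_self_eq_norm_sq]
    field_simp
  have hCw : ⟪c, w⟫ = ‖c‖ := by
    rw [hw_def, real_inner_smul_right, real_inner_self_eq_norm_sq]
    field_simp
  have hsplit : ∀ (X : EuclideanSpace ℝ (Fin 2)) (e : EuclideanSpace ℝ (Fin 2)),
      ⟪X - p, e⟫ = ⟪X - F, e⟫ + ⟪F - p, e⟫ := by
    intro X e
    rw [← inner_add_left]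
    congr 1
    abel
  have hzero : ⟪F - p, u⟫ + ⟪F - p, v⟫ + ⟪F - p, w⟫ = 0 := by
    rw [← inner_add_right, ← inner_add_right, hsum, inner_zero_right]
  have k1 := key A u hnu
  have k2 := key B v hnv
  have k3 := key C w hnw
  rw [hsplit A u] at k1
  rw [hsplit B v] at k2
  rw [hsplit C w] at k3
  rw [← ha_def, hAu] at k1
  rw [← hb_def, hBv] at k2
  rw [← hc_def, hCw] at k3
  have dFA : dist F A = ‖a‖ := by rw [dist_comm, dist_eq_norm]
  have dFB : dist F B = ‖b‖ := by rw [dist_comm, dist_eq_norm]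
  have dFC : dist F C = ‖c‖ := by rw [dist_comm, dist_eq_norm]
  rw [dFA, dFB, dFC]
  linarith [hzero, k1, k2, k3]
end

section
/- If triangle ABC has an angle at vertex A of measure at least 120°, then A minimizes the sum of distances p ↦ dist(p,A) + dist(p,B) + dist(p,C) over all points p in the plane. -/
open EuclideanGeometry
open scoped RealInnerProductSpace

theorem fermat_point_obtuse_vertex_min
    (A B C : EuclideanSpace ℝ (Fin 2))
    (hncol : ¬ Collinear ℝ ({A, B, C} : Set (EuclideanSpace ℝ (Fin 2))))
    (hangle : 2 * Real.pi / 3 ≤ ∠ B A C) :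
    ∀ p : EuclideanSpace ℝ (Fin 2),
      dist A A + dist A B + dist A C ≤ dist p A + dist p B + dist p C := by
  have hAB : B ≠ A := by
    rintro rfl
    exact hncol (by simpa [Set.insert_comm] using collinear_pair ℝ B C)
  have hAC : C ≠ A := by
    rintro rfl
    exact hncol (by simpa [Set.insert_comm, Set.pair_comm] using collinear_pair ℝ C B)
  intro p
  set x : EuclideanSpace ℝ (Fin 2) := B - A with hx
  set y : EuclideanSpace ℝ (Fin 2) := C - A with hy
  set q : EuclideanSpace ℝ (Fin 2) := p - A with hq
  have ha : 0 < ‖x‖ := by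
    rw [norm_pos_iff]; simpa [hx, sub_eq_zero] using hAB
  have hb : 0 < ‖y‖ := by
    rw [norm_pos_iff]; simpa [hy, sub_eq_zero] using hAC
  have hcos : Real.cos (∠ B A C) ≤ -(1/2) := by
    have h1 : Real.cos (∠ B A C) ≤ Real.cos (2 * Real.pi / 3) :=
      Real.cos_le_cos_of_nonneg_of_le_pi (by positivity) (angle_le_pi _ _ _) hangle
    have h2 : Real.cos (2 * Real.pi / 3) = -(1/2) := by
      rw [show 2 * Real.pi / 3 = Real.pi - Real.pi / 3 by ring, Real.cos_pi_sub,
        Real.cos_pi_div_three]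
    linarith
  have hinner : ⟪x, y⟫ ≤ -(1/2) * (‖x‖ * ‖y‖) := by
    have hang : ∠ B A C = InnerProductGeometry.angle x y := by
      rw [EuclideanGeometry.angle, hx, hy, vsub_eq_sub, vsub_eq_sub]
    rw [hang, InnerProductGeometry.cos_angle] at hcos
    rw [div_le_iff₀ (by positivity)] at hcos
    linarith
  -- inequality for B
  have hpb : ‖x‖ - ⟪q, x⟫ / ‖x‖ ≤ dist p B := by
    have hd : dist p B = ‖x - q‖ := by
      rw [dist_eq_norm, ← norm_neg]
      congr 1
      simp [hx, hq]
    have hcs : ⟪x - q, x⟫ ≤ ‖x - q‖ * ‖x‖ := real_inner_le_norm _ _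
    rw [inner_sub_left, real_inner_self_eq_norm_mul_norm] at hcs
    have h2 : (‖x‖ * ‖x‖ - ⟪q, x⟫) / ‖x‖ ≤ ‖x - q‖ := by
      rw [div_le_iff₀ ha]; linarith
    have h3 : ‖x‖ - ⟪q, x⟫ / ‖x‖ = (‖x‖ * ‖x‖ - ⟪q, x⟫) / ‖x‖ := by
      rw [sub_div, mul_div_assoc, div_self (ne_of_gt ha), mul_one]
    rw [hd, h3]; exact h2
  have hpc : ‖y‖ - ⟪q, y⟫ / ‖y‖ ≤ dist p C := by
    have hd : dist p C = ‖y - q‖ := by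
      rw [dist_eq_norm, ← norm_neg]
      congr 1
      simp [hy, hq]
    have hcs : ⟪y - q, y⟫ ≤ ‖y - q‖ * ‖y‖ := real_inner_le_norm _ _
    rw [inner_sub_left, real_inner_self_eq_norm_mul_norm] at hcs
    have h2 : (‖y‖ * ‖y‖ - ⟪q, y⟫) / ‖y‖ ≤ ‖y - q‖ := by
      rw [div_le_iff₀ hb]; linarith
    have h3 : ‖y‖ - ⟪q, y⟫ / ‖y‖ = (‖y‖ * ‖y‖ - ⟪q, y⟫) / ‖y‖ := by
      rw [sub_div, mul_div_assoc, div_self (ne_of_gt hb), mul_one]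
    rw [hd, h3]; exact h2
  -- inequality for A
  have hpa : ⟪q, x⟫ / ‖x‖ + ⟪q, y⟫ / ‖y‖ ≤ dist p A := by
    have hdA : dist p A = ‖q‖ := by rw [dist_eq_norm]
    set w : EuclideanSpace ℝ (Fin 2) := ‖x‖⁻¹ • x + ‖y‖⁻¹ • y with hw
    have hux : ‖(‖x‖⁻¹ • x : EuclideanSpace ℝ (Fin 2))‖ = 1 := by
      rw [norm_smul, norm_inv, norm_norm, inv_mul_cancel₀ (ne_of_gt ha)]
    have huy : ‖(‖y‖⁻¹ • y : EuclideanSpace ℝ (Fin 2))‖ = 1 := by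
      rw [norm_smul, norm_inv, norm_norm, inv_mul_cancel₀ (ne_of_gt hb)]
    have hwnorm : ‖w‖ ≤ 1 := by
      have hsq : ‖w‖ ^ 2 = 2 + 2 * (⟪x, y⟫ * (‖x‖⁻¹ * ‖y‖⁻¹)) := by
        rw [hw, norm_add_sq_real, hux, huy, real_inner_smul_left, real_inner_smul_right]
        ring
      have hab : (‖x‖ * ‖y‖) * (‖x‖⁻¹ * ‖y‖⁻¹) = 1 := by
        field_simp
      have h5 : ⟪x, y⟫ * (‖x‖⁻¹ * ‖y‖⁻¹) ≤ -(1/2) := by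
        have h6 := mul_le_mul_of_nonneg_right hinner
          (by positivity : (0:ℝ) ≤ ‖x‖⁻¹ * ‖y‖⁻¹)
        nlinarith [h6, hab]
      nlinarith [norm_nonneg w, sq_nonneg (‖w‖ - 1), hsq, h5]
    have hiw : ⟪q, w⟫ = ⟪q, x⟫ / ‖x‖ + ⟪q, y⟫ / ‖y‖ := by
      rw [hw, inner_add_right, real_inner_smul_right, real_inner_smul_right,
        div_eq_inv_mul, div_eq_inv_mul]
    have hcs : ⟪q, w⟫ ≤ ‖q‖ * ‖w‖ := real_inner_le_norm _ _
    rw [hdA, ← hiw]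
    nlinarith [norm_nonneg q, norm_nonneg w, hcs, hwnorm]
  have hdAB : dist A B = ‖x‖ := by rw [dist_eq_norm, ← norm_neg]; congr 1; simp [hx]
  have hdAC : dist A C = ‖y‖ := by rw [dist_eq_norm, ← norm_neg]; congr 1; simp [hy]
  rw [dist_self, hdAB, hdAC]
  linarith
end

section
/- Let A, B, C be non-collinear points with all angles of triangle ABC less than 120°, and let A' be the apex of the equilateral triangle erected externally on side BC, and similarly B' on CA and C' on AB. Then the three segments AA', BB', CC' pass through a common point. -/
open EuclideanGeometry Affine
local notation "E2" => EuclideanSpace ℝ (Fin 2)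

private lemma pt_ext {P Q : E2} (h0 : P 0 = Q 0) (h1 : P 1 = Q 1) : P = Q := by
  ext i; fin_cases i <;> assumption

private lemma distsq (X Y : E2) : dist X Y ^ 2 = (X 0 - Y 0)^2 + (X 1 - Y 1)^2 := by
  rw [EuclideanSpace.dist_eq, Real.sq_sqrt (by positivity)]
  simp [Fin.sum_univ_two, Real.dist_eq, sq_abs]

private lemma Lpos {P Q : E2} (h : P ≠ Q) : 0 < (Q 0 - P 0)^2 + (Q 1 - P 1)^2 := by
  by_contra hc; push_neg at hc
  have h0 : Q 0 - P 0 = 0 := by nlinarith [sq_nonneg (Q 0 - P 0), sq_nonneg (Q 1 - P 1)]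
  have h1 : Q 1 - P 1 = 0 := by nlinarith [sq_nonneg (Q 0 - P 0), sq_nonneg (Q 1 - P 1)]
  exact h (pt_ext (by linarith) (by linarith))

private lemma apex_struct {P Q Z : E2} (hPQ : P ≠ Q)
    (h1 : dist P Z = dist P Q) (h2 : dist Q Z = dist P Q) :
    ∃ t : ℝ, Z 0 = (P 0 + Q 0)/2 - t * (Q 1 - P 1) ∧ Z 1 = (P 1 + Q 1)/2 + t * (Q 0 - P 0) ∧
      t ^ 2 = 3/4 := by
  have hL : 0 < (Q 0 - P 0)^2 + (Q 1 - P 1)^2 := Lpos hPQ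
  have hLne : (Q 0 - P 0)^2 + (Q 1 - P 1)^2 ≠ 0 := ne_of_gt hL
  have e1 : (Z 0 - P 0)^2 + (Z 1 - P 1)^2 = (Q 0 - P 0)^2 + (Q 1 - P 1)^2 := by
    have h : dist P Z ^ 2 = dist P Q ^ 2 := by rw [h1]
    rw [distsq, distsq] at h; linear_combination h
  have e2 : (Z 0 - Q 0)^2 + (Z 1 - Q 1)^2 = (Q 0 - P 0)^2 + (Q 1 - P 1)^2 := by
    have h : dist Q Z ^ 2 = dist P Q ^ 2 := by rw [h2]
    rw [distsq, distsq] at h; linear_combination h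
  have horth : (Z 0 - (P 0 + Q 0)/2) * (Q 0 - P 0) + (Z 1 - (P 1 + Q 1)/2) * (Q 1 - P 1) = 0 := by
    linear_combination (1/2) * e1 - (1/2) * e2
  set t := ((Q 0 - P 0) * (Z 1 - (P 1 + Q 1)/2) - (Q 1 - P 1) * (Z 0 - (P 0 + Q 0)/2)) /
    ((Q 0 - P 0)^2 + (Q 1 - P 1)^2) with htdef
  have hz0 : Z 0 = (P 0 + Q 0)/2 - t * (Q 1 - P 1) := by
    rw [htdef]; field_simp; linear_combination 2 * (Q 0 - P 0) * horth
  have hz1 : Z 1 = (P 1 + Q 1)/2 + t * (Q 0 - P 0) := by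
    rw [htdef]; field_simp; linear_combination 2 * (Q 1 - P 1) * horth
  refine ⟨t, hz0, hz1, ?_⟩
  have hsum : (Z 0 - (P 0 + Q 0)/2)^2 + (Z 1 - (P 1 + Q 1)/2)^2 =
      3/4 * ((Q 0 - P 0)^2 + (Q 1 - P 1)^2) := by
    linear_combination e1 - horth
  have h3 : t^2 * ((Q 0 - P 0)^2 + (Q 1 - P 1)^2) = 3/4 * ((Q 0 - P 0)^2 + (Q 1 - P 1)^2) := by
    rw [hz0] at hsum
    rw [hz1] at hsum
    linear_combination hsum
  exact mul_right_cancel₀ hLne h3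

private lemma coord_comb (P Q : E2) (r : ℝ) (i : Fin 2) :
    (r • (Q -ᵥ P) +ᵥ P) i = r * (Q i - P i) + P i := by
  simp [vsub_eq_sub, vadd_eq_add, PiLp.smul_apply, PiLp.add_apply, PiLp.sub_apply]


private lemma mem_line_iff {P Q Z : E2} :
    Z ∈ line[ℝ, P, Q] ↔ ∃ r : ℝ, r • (Q -ᵥ P) +ᵥ P = Z := by
  rw [← AffineSubspace.vsub_right_mem_direction_iff_mem (left_mem_affineSpan_pair ℝ P Q),
    direction_affineSpan, mem_vectorSpan_pair_rev]
  constructor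
  · rintro ⟨r, h⟩; exact ⟨r, by rw [h, vsub_vadd]⟩
  · rintro ⟨r, h⟩; exact ⟨r, by rw [← h, vadd_vsub]⟩

private lemma mem_line_of_cross {P Q Z : E2} (hne : P ≠ Q)
    (h : (Q 0 - P 0) * (Z 1 - P 1) - (Q 1 - P 1) * (Z 0 - P 0) = 0) :
    Z ∈ line[ℝ, P, Q] := by
  have hne' : Q 0 - P 0 ≠ 0 ∨ Q 1 - P 1 ≠ 0 := by
    by_contra hc
    push_neg at hc
    have e0 : P 0 = Q 0 := by linarith [hc.1]
    have e1 : P 1 = Q 1 := by linarith [hc.2]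
    exact hne (pt_ext e0 e1)
  rcases hne' with h0 | h0
  · refine mem_line_iff.mpr ⟨(Z 0 - P 0) / (Q 0 - P 0), ?_⟩
    refine pt_ext ?_ ?_ <;> rw [coord_comb]
    · field_simp; ring
    · field_simp; linear_combination -h
  · refine mem_line_iff.mpr ⟨(Z 1 - P 1) / (Q 1 - P 1), ?_⟩
    refine pt_ext ?_ ?_ <;> rw [coord_comb]
    · field_simp; linear_combination h
    · field_simp; ring

private lemma cross_side {P Q X Y : E2} (hne : P ≠ Q)
    (h : (affineSpan ℝ ({P, Q} : Set E2)).SOppSide X Y) :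
    ((Q 0 - P 0) * (X 1 - P 1) - (Q 1 - P 1) * (X 0 - P 0)) *
      ((Q 0 - P 0) * (Y 1 - P 1) - (Q 1 - P 1) * (Y 0 - P 0)) < 0 := by
  obtain ⟨⟨p₁, hp₁, p₂, hp₂, hray⟩, hX, hY⟩ := h
  set gX := (Q 0 - P 0) * (X 1 - P 1) - (Q 1 - P 1) * (X 0 - P 0) with hgX
  set gY := (Q 0 - P 0) * (Y 1 - P 1) - (Q 1 - P 1) * (Y 0 - P 0) with hgY
  have hgXne : gX ≠ 0 := fun hz => hX (mem_line_of_cross hne hz)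
  have hgYne : gY ≠ 0 := fun hz => hY (mem_line_of_cross hne hz)
  obtain ⟨r₁, hr₁⟩ := mem_line_iff.mp hp₁
  obtain ⟨r₂, hr₂⟩ := mem_line_iff.mp hp₂
  have hp₁0 : p₁ 0 = r₁ * (Q 0 - P 0) + P 0 := by rw [← hr₁, coord_comb]
  have hp₁1 : p₁ 1 = r₁ * (Q 1 - P 1) + P 1 := by rw [← hr₁, coord_comb]
  have hp₂0 : p₂ 0 = r₂ * (Q 0 - P 0) + P 0 := by rw [← hr₂, coord_comb]
  have hp₂1 : p₂ 1 = r₂ * (Q 1 - P 1) + P 1 := by rw [← hr₂, coord_comb]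
  rcases hray with h0 | h0 | ⟨a, b, ha, hb, heq⟩
  · exact absurd (by rw [vsub_eq_zero_iff_eq] at h0; rw [h0]; exact hp₁) hX
  · exact absurd (by rw [vsub_eq_zero_iff_eq] at h0; rw [← h0]; exact hp₂) hY
  · have heq0 : a * (X 0 - p₁ 0) = b * (p₂ 0 - Y 0) := by
      have := congrArg (fun v : E2 => v 0) heq
      simpa [vsub_eq_sub, PiLp.smul_apply, PiLp.sub_apply] using this
    have heq1 : a * (X 1 - p₁ 1) = b * (p₂ 1 - Y 1) := by
      have := congrArg (fun v : E2 => v 1) heq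
      simpa [vsub_eq_sub, PiLp.smul_apply, PiLp.sub_apply] using this
    rw [hp₁0] at heq0; rw [hp₁1] at heq1; rw [hp₂0] at heq0; rw [hp₂1] at heq1
    have key : a * gX = -(b * gY) := by
      rw [hgX, hgY]
      linear_combination (Q 0 - P 0) * heq1 - (Q 1 - P 1) * heq0
    have key2 : a * (gX * gY) = -(b * gY ^ 2) := by linear_combination gY * key
    have hsq : 0 < gY ^ 2 := lt_of_le_of_ne (sq_nonneg _) (Ne.symm (pow_ne_zero 2 hgYne))
    nlinarith [mul_pos hb hsq]



private lemma div_form (a c b d : ℝ) (hd : d ≠ 0) : b / d * a + c = (b * a + c * d) / d := by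
  field_simp

private lemma cross_zero_helper {p q n1 n0 c1 c0 d : ℝ} (hd : d ≠ 0)
    (h : p * (n1 - c1 * d) - q * (n0 - c0 * d) = 0) :
    p * (n1 / d - c1) - q * (n0 / d - c0) = 0 := by
  field_simp
  linear_combination h

set_option maxHeartbeats 3200000 in
theorem napoleon_lines_concurrent
    (A B C A' B' C' : EuclideanSpace ℝ (Fin 2))
    (hncol : ¬ Collinear ℝ ({A, B, C} : Set (EuclideanSpace ℝ (Fin 2))))
    (hA : ∠ B A C < 2 * Real.pi / 3)
    (hB : ∠ A B C < 2 * Real.pi / 3)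
    (hC : ∠ B C A < 2 * Real.pi / 3)
    (hA'1 : dist B A' = dist B C) (hA'2 : dist C A' = dist B C)
    (hA'side : (affineSpan ℝ ({B, C} : Set (EuclideanSpace ℝ (Fin 2)))).SOppSide A A')
    (hB'1 : dist C B' = dist C A) (hB'2 : dist A B' = dist C A)
    (hB'side : (affineSpan ℝ ({C, A} : Set (EuclideanSpace ℝ (Fin 2)))).SOppSide B B')
    (hC'1 : dist A C' = dist A B) (hC'2 : dist B C' = dist A B)
    (hC'side : (affineSpan ℝ ({A, B} : Set (EuclideanSpace ℝ (Fin 2)))).SOppSide C C') :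
    ∃ X : EuclideanSpace ℝ (Fin 2),
      X ∈ affineSpan ℝ ({A, A'} : Set (EuclideanSpace ℝ (Fin 2))) ∧
      X ∈ affineSpan ℝ ({B, B'} : Set (EuclideanSpace ℝ (Fin 2))) ∧
      X ∈ affineSpan ℝ ({C, C'} : Set (EuclideanSpace ℝ (Fin 2))) := by
  have hBC : B ≠ C := by
    intro h; apply hncol; rw [h]
    have he : ({A, C, C} : Set (EuclideanSpace ℝ (Fin 2))) = {A, C} := by simp
    rw [he]; exact collinear_pair ℝ A C
  have hCA : C ≠ A := by
    intro h; apply hncol; rw [h]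
    have he : ({A, B, A} : Set (EuclideanSpace ℝ (Fin 2))) = {A, B} := by
      simp [Set.insert_comm, Set.pair_comm]
    rw [he]; exact collinear_pair ℝ A B
  have hAB : A ≠ B := by
    intro h; apply hncol; rw [h]
    have he : ({B, B, C} : Set (EuclideanSpace ℝ (Fin 2))) = {B, C} := by simp
    rw [he]; exact collinear_pair ℝ B C
  have hΔ : ((C 0 - B 0) * (A 1 - B 1) - (C 1 - B 1) * (A 0 - B 0)) ≠ 0 := by
    intro h
    exact hncol (collinear_insert_of_mem_affineSpan_pair (mem_line_of_cross hBC h))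
  obtain ⟨tA, hA'c0, hA'c1, htA2⟩ := apex_struct hBC hA'1 hA'2
  obtain ⟨tB, hB'c0, hB'c1, htB2⟩ := apex_struct hCA hB'1 hB'2
  obtain ⟨tC, hC'c0, hC'c1, htC2⟩ := apex_struct hAB hC'1 hC'2
  have hsA : tA * ((C 0 - B 0) * (A 1 - B 1) - (C 1 - B 1) * (A 0 - B 0)) < 0 := by
    have hg := cross_side hBC hA'side
    rw [hA'c0, hA'c1] at hg
    by_contra hge; push_neg at hge
    linarith [mul_nonneg hge (Lpos hBC).le, hg]
  have hsB : tB * ((C 0 - B 0) * (A 1 - B 1) - (C 1 - B 1) * (A 0 - B 0)) < 0 := by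
    have hg := cross_side hCA hB'side
    rw [hB'c0, hB'c1] at hg
    by_contra hge; push_neg at hge
    linarith [mul_nonneg hge (Lpos hCA).le, hg]
  have hsC : tC * ((C 0 - B 0) * (A 1 - B 1) - (C 1 - B 1) * (A 0 - B 0)) < 0 := by
    have hg := cross_side hAB hC'side
    rw [hC'c0, hC'c1] at hg
    by_contra hge; push_neg at hge
    linarith [mul_nonneg hge (Lpos hAB).le, hg]
  have htBA : tB = tA := by
    have h3 : (tA - tB) * (tA + tB) = 0 := by linear_combination htA2 - htB2
    rcases mul_eq_zero.mp h3 with h4 | h4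
    · linarith
    · exfalso
      have h5 : tB * ((C 0 - B 0) * (A 1 - B 1) - (C 1 - B 1) * (A 0 - B 0)) = -(tA * ((C 0 - B 0) * (A 1 - B 1) - (C 1 - B 1) * (A 0 - B 0))) := by linear_combination ((C 0 - B 0) * (A 1 - B 1) - (C 1 - B 1) * (A 0 - B 0)) * h4
      linarith [hsA, hsB]
  have htCA : tC = tA := by
    have h3 : (tA - tC) * (tA + tC) = 0 := by linear_combination htA2 - htC2
    rcases mul_eq_zero.mp h3 with h4 | h4
    · linarith
    · exfalso
      have h5 : tC * ((C 0 - B 0) * (A 1 - B 1) - (C 1 - B 1) * (A 0 - B 0)) = -(tA * ((C 0 - B 0) * (A 1 - B 1) - (C 1 - B 1) * (A 0 - B 0))) := by linear_combination ((C 0 - B 0) * (A 1 - B 1) - (C 1 - B 1) * (A 0 - B 0)) * h4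
      linarith [hsA, hsC]
  rw [htBA] at hB'c0 hB'c1
  rw [htCA] at hC'c0 hC'c1
  have hS : (0:ℝ) ≤ ((A 0 - B 0) ^ 2 + (A 1 - B 1) ^ 2 + (B 0 - C 0) ^ 2 + (B 1 - C 1) ^ 2 + (C 0 - A 0) ^ 2 + (C 1 - A 1) ^ 2) := by positivity
  have key1 : (((B 0 + C 0) / 2 - tA * (C 1 - B 1) - A 0) * ((C 1 + A 1) / 2 + tA * (A 0 - C 0) - B 1) - ((B 1 + C 1) / 2 + tA * (C 0 - B 0) - A 1) * ((C 0 + A 0) / 2 - tA * (A 1 - C 1) - B 0)) = 3 / 2 * ((C 0 - B 0) * (A 1 - B 1) - (C 1 - B 1) * (A 0 - B 0)) - tA / 2 * ((A 0 - B 0) ^ 2 + (A 1 - B 1) ^ 2 + (B 0 - C 0) ^ 2 + (B 1 - C 1) ^ 2 + (C 0 - A 0) ^ 2 + (C 1 - A 1) ^ 2) := by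
    linear_combination ((C 0 - B 0) * (A 1 - B 1) - (C 1 - B 1) * (A 0 - B 0)) * htA2
  have hDne : (((B 0 + C 0) / 2 - tA * (C 1 - B 1) - A 0) * ((C 1 + A 1) / 2 + tA * (A 0 - C 0) - B 1) - ((B 1 + C 1) / 2 + tA * (C 0 - B 0) - A 1) * ((C 0 + A 0) / 2 - tA * (A 1 - C 1) - B 0)) ≠ 0 := by
    rcases hΔ.lt_or_gt with h5 | h5
    · have htp : 0 < tA := by
        by_contra h6; push_neg at h6
        linarith [mul_nonneg (neg_nonneg.mpr h6) (neg_nonneg.mpr h5.le), hsA]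
      refine ne_of_lt ?_
      linarith [key1, mul_nonneg htp.le hS, h5]
    · have htn : tA < 0 := by
        by_contra h6; push_neg at h6
        linarith [mul_nonneg h6 h5.le, hsA]
      refine ne_of_gt ?_
      linarith [key1, mul_nonneg (neg_nonneg.mpr htn.le) hS, h5]
  set X : EuclideanSpace ℝ (Fin 2) := (((B 0 - A 0) * ((C 1 + A 1) / 2 + tA * (A 0 - C 0) - B 1) - (B 1 - A 1) * ((C 0 + A 0) / 2 - tA * (A 1 - C 1) - B 0)) / (((B 0 + C 0) / 2 - tA * (C 1 - B 1) - A 0) * ((C 1 + A 1) / 2 + tA * (A 0 - C 0) - B 1) - ((B 1 + C 1) / 2 + tA * (C 0 - B 0) - A 1) * ((C 0 + A 0) / 2 - tA * (A 1 - C 1) - B 0))) • (A' -ᵥ A) +ᵥ A with hXdef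
  have hx0 : X 0 = (((B 0 - A 0) * ((C 1 + A 1) / 2 + tA * (A 0 - C 0) - B 1) - (B 1 - A 1) * ((C 0 + A 0) / 2 - tA * (A 1 - C 1) - B 0)) * ((B 0 + C 0) / 2 - tA * (C 1 - B 1) - A 0) + A 0 * (((B 0 + C 0) / 2 - tA * (C 1 - B 1) - A 0) * ((C 1 + A 1) / 2 + tA * (A 0 - C 0) - B 1) - ((B 1 + C 1) / 2 + tA * (C 0 - B 0) - A 1) * ((C 0 + A 0) / 2 - tA * (A 1 - C 1) - B 0))) / (((B 0 + C 0) / 2 - tA * (C 1 - B 1) - A 0) * ((C 1 + A 1) / 2 + tA * (A 0 - C 0) - B 1) - ((B 1 + C 1) / 2 + tA * (C 0 - B 0) - A 1) * ((C 0 + A 0) / 2 - tA * (A 1 - C 1) - B 0)) := by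
    rw [hXdef, coord_comb, hA'c0, div_form _ _ _ _ hDne]
  have hx1 : X 1 = (((B 0 - A 0) * ((C 1 + A 1) / 2 + tA * (A 0 - C 0) - B 1) - (B 1 - A 1) * ((C 0 + A 0) / 2 - tA * (A 1 - C 1) - B 0)) * ((B 1 + C 1) / 2 + tA * (C 0 - B 0) - A 1) + A 1 * (((B 0 + C 0) / 2 - tA * (C 1 - B 1) - A 0) * ((C 1 + A 1) / 2 + tA * (A 0 - C 0) - B 1) - ((B 1 + C 1) / 2 + tA * (C 0 - B 0) - A 1) * ((C 0 + A 0) / 2 - tA * (A 1 - C 1) - B 0))) / (((B 0 + C 0) / 2 - tA * (C 1 - B 1) - A 0) * ((C 1 + A 1) / 2 + tA * (A 0 - C 0) - B 1) - ((B 1 + C 1) / 2 + tA * (C 0 - B 0) - A 1) * ((C 0 + A 0) / 2 - tA * (A 1 - C 1) - B 0)) := by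
    rw [hXdef, coord_comb, hA'c1, div_form _ _ _ _ hDne]
  refine ⟨X, mem_line_iff.mpr ⟨((B 0 - A 0) * ((C 1 + A 1) / 2 + tA * (A 0 - C 0) - B 1) - (B 1 - A 1) * ((C 0 + A 0) / 2 - tA * (A 1 - C 1) - B 0)) / (((B 0 + C 0) / 2 - tA * (C 1 - B 1) - A 0) * ((C 1 + A 1) / 2 + tA * (A 0 - C 0) - B 1) - ((B 1 + C 1) / 2 + tA * (C 0 - B 0) - A 1) * ((C 0 + A 0) / 2 - tA * (A 1 - C 1) - B 0)), hXdef.symm⟩, ?_, ?_⟩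
  · refine mem_line_iff.mpr ⟨((B 0 - A 0) * ((B 1 + C 1) / 2 + tA * (C 0 - B 0) - A 1) - (B 1 - A 1) * ((B 0 + C 0) / 2 - tA * (C 1 - B 1) - A 0)) / (((B 0 + C 0) / 2 - tA * (C 1 - B 1) - A 0) * ((C 1 + A 1) / 2 + tA * (A 0 - C 0) - B 1) - ((B 1 + C 1) / 2 + tA * (C 0 - B 0) - A 1) * ((C 0 + A 0) / 2 - tA * (A 1 - C 1) - B 0)), pt_ext ?_ ?_⟩
    · rw [coord_comb, hB'c0, div_form _ _ _ _ hDne, hx0, div_eq_div_iff hDne hDne]; ring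
    · rw [coord_comb, hB'c1, div_form _ _ _ _ hDne, hx1, div_eq_div_iff hDne hDne]; ring
  · have hcross : ((A 0 + B 0) / 2 - tA * (B 1 - A 1) - C 0) * (X 1 - C 1) - ((A 1 + B 1) / 2 + tA * (B 0 - A 0) - C 1) * (X 0 - C 0) = 0 := by
      rw [hx0, hx1]
      refine cross_zero_helper hDne ?_
      ring
    have hCC' : C ≠ C' := fun h => (AffineSubspace.not_sOppSide_self _ C) (by rw [← h] at hC'side; exact hC'side)
    have hNCp := Lpos hCC'
    rw [hC'c0, hC'c1] at hNCp
    have hNC : (0:ℝ) < (((A 0 + B 0) / 2 - tA * (B 1 - A 1) - C 0) ^ 2 + ((A 1 + B 1) / 2 + tA * (B 0 - A 0) - C 1) ^ 2) := by linarith [hNCp]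
    refine mem_line_iff.mpr
      ⟨((X 0 - C 0) * ((A 0 + B 0) / 2 - tA * (B 1 - A 1) - C 0) + (X 1 - C 1) * ((A 1 + B 1) / 2 + tA * (B 0 - A 0) - C 1)) / (((A 0 + B 0) / 2 - tA * (B 1 - A 1) - C 0) ^ 2 + ((A 1 + B 1) / 2 + tA * (B 0 - A 0) - C 1) ^ 2), pt_ext ?_ ?_⟩
    · rw [coord_comb, hC'c0, div_form _ _ _ _ hNC.ne', div_eq_iff hNC.ne']
      linear_combination ((A 1 + B 1) / 2 + tA * (B 0 - A 0) - C 1) * hcross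
    · rw [coord_comb, hC'c1, div_form _ _ _ _ hNC.ne', div_eq_iff hNC.ne']
      linear_combination (-((A 0 + B 0) / 2 - tA * (B 1 - A 1) - C 0)) * hcross
end

section
/- If F is the point minimizing the sum of distances to points p₁, …, pₙ (the Fermat–Weber point), and each point pᵢ is moved along the segment from pᵢ toward F to a new position pᵢ' (i.e., pᵢ' lies on segment [pᵢ, F]), then F still minimizes the sum of distances to p₁', …, pₙ', provided F is not equal to any pᵢ'. -/
theorem fermat_weber_invariant_under_contraction
    (n : ℕ) (hn : 1 ≤ n)
    (p p' : Fin n → EuclideanSpace ℝ (Fin 2)) (F : EuclideanSpace ℝ (Fin 2))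
    (hmin : ∀ x : EuclideanSpace ℝ (Fin 2),
      ∑ i, dist F (p i) ≤ ∑ i, dist x (p i))
    (hseg : ∀ i, p' i ∈ segment ℝ (p i) F)
    (hne : ∀ i, p' i ≠ F) :
    ∀ x : EuclideanSpace ℝ (Fin 2),
      ∑ i, dist F (p' i) ≤ ∑ i, dist x (p' i) := by
  intro x
  have h1 : ∀ i, dist F (p' i) + dist (p' i) (p i) = dist F (p i) := by
    intro i
    have h := dist_add_dist_of_mem_segment (hseg i)
    rw [dist_comm F (p' i), dist_comm F (p i), dist_comm (p' i) (p i)]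
    linarith
  have h2 : ∀ i, dist x (p i) ≤ dist x (p' i) + dist (p' i) (p i) :=
    fun i => dist_triangle _ _ _
  have hF : ∑ i, dist F (p' i) = ∑ i, dist F (p i) - ∑ i, dist (p' i) (p i) := by
    rw [← Finset.sum_sub_distrib]
    exact Finset.sum_congr rfl fun i _ => by linarith [h1 i]
  have hx : ∑ i, dist x (p i) ≤ ∑ i, dist x (p' i) + ∑ i, dist (p' i) (p i) := by
    rw [← Finset.sum_add_distrib]
    exact Finset.sum_le_sum fun i _ => h2 i
  linarith [hmin x]
end
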